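/- Let G be a finite multidigraph that is k-out-regular for a positive integer k, with an edge e* = (w*, v*). Then the image of σ ∘ ψ is contained in the image of φ_{𝓛G,e*}; consequently σ induces a homomorphism σ̄ from the cokernel of ψ to the critical group K(𝓛G, e*). Here σ(v) = Σ_{e⁻ = v} e, ψ(v) = Δ_G(v) for v ≠ w* and ψ(w*) = Δ_G(w*) − v*, and φ_{𝓛G,e*}(e) = Δ_{𝓛G}(e) for e ≠ e* and φ_{𝓛G,e*}(e*) = e*. -/

import Mathlib

open Finsupp

/-- The Laplacian of a multidigraph with edge tail map `t` and head map `h`,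
as a linear endomorphism of the free abelian group on the vertices. -/
noncomputable def lap {V E : Type*} [Fintype E] [DecidableEq V] (t h : E → V) :
    (V →₀ ℤ) →ₗ[ℤ] (V →₀ ℤ) :=
  Finsupp.lift (V →₀ ℤ) ℤ V fun v =>
    ∑ e : E, if t e = v then Finsupp.single (h e) (1 : ℤ) - Finsupp.single v 1 else 0

/-- The modified Laplacian `φ_{G,w}` : sends `v ↦ Δ_G v` for `v ≠ w`, and `w ↦ w`. -/
noncomputable def phiMod {V E : Type*} [Fintype E] [DecidableEq V] (t h : E → V) (w : V) :
    (V →₀ ℤ) →ₗ[ℤ] (V →₀ ℤ) :=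
  Finsupp.lift (V →₀ ℤ) ℤ V fun v =>
    if v = w then Finsupp.single w 1 else lap t h (Finsupp.single v 1)

/-- Edges of the directed line graph: pairs `(e, f)` with `e⁺ = f⁻`. -/
def LineEdge {V E : Type*} (t h : E → V) : Type _ := {p : E × E // h p.1 = t p.2}

instance {V E : Type*} [Fintype E] [DecidableEq V] (t h : E → V) :
    Fintype (LineEdge t h) := by
  unfold LineEdge; infer_instance

/-- in-degree of a vertex -/
def indeg {V E : Type*} [Fintype E] [DecidableEq V] (h : E → V) (v : V) : ℕ :=
  (Finset.univ.filter fun e => h e = v).card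

/-- out-degree of a vertex -/
def outdeg {V E : Type*} [Fintype E] [DecidableEq V] (t : E → V) (v : V) : ℕ :=
  (Finset.univ.filter fun e => t e = v).card

/-- The modified target map `τ`: `e ↦ e⁺` for `e ≠ e*`, `e* ↦ 0`. -/
noncomputable def tau {V E : Type*} [DecidableEq E] (h : E → V) (estar : E) :
    (E →₀ ℤ) →ₗ[ℤ] (V →₀ ℤ) :=
  Finsupp.lift (V →₀ ℤ) ℤ E fun e =>
    if e = estar then 0 else Finsupp.single (h e) 1

/-- The map `ρ`: `e ↦ Δ_G(w*) − v* − w* + e⁺` for `e ≠ e*`, `e* ↦ 0`,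
where `w* = t e*` and `v* = h e*`. -/
noncomputable def rho {V E : Type*} [Fintype E] [DecidableEq V] [DecidableEq E]
    (t h : E → V) (estar : E) : (E →₀ ℤ) →ₗ[ℤ] (V →₀ ℤ) :=
  Finsupp.lift (V →₀ ℤ) ℤ E fun e =>
    if e = estar then 0 else
      lap t h (Finsupp.single (t estar) 1) - Finsupp.single (h estar) 1
        - Finsupp.single (t estar) 1 + Finsupp.single (h e) 1

/-- The map `ρ₀`: `v ↦ Δ_G(w*) − v* − w* + v`. -/
noncomputable def rho0 {V E : Type*} [Fintype E] [DecidableEq V] (t h : E → V) (estar : E) :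
    (V →₀ ℤ) →ₗ[ℤ] (V →₀ ℤ) :=
  Finsupp.lift (V →₀ ℤ) ℤ V fun v =>
    lap t h (Finsupp.single (t estar) 1) - Finsupp.single (h estar) 1
      - Finsupp.single (t estar) 1 + Finsupp.single v 1

/-- The map `ψ`: `v ↦ Δ_G v` for `v ≠ w*`, and `w* ↦ Δ_G(w*) − v*`. -/
noncomputable def psi {V E : Type*} [Fintype E] [DecidableEq V] (t h : E → V) (estar : E) :
    (V →₀ ℤ) →ₗ[ℤ] (V →₀ ℤ) :=
  Finsupp.lift (V →₀ ℤ) ℤ V fun v =>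
    if v = t estar then
      lap t h (Finsupp.single (t estar) 1) - Finsupp.single (h estar) 1
    else lap t h (Finsupp.single v 1)

/-- The map `σ`: `v ↦ Σ_{e⁻ = v} e`. -/
noncomputable def sigmaMap {V E : Type*} [Fintype E] [DecidableEq V] (t : E → V) :
    (V →₀ ℤ) →ₗ[ℤ] (E →₀ ℤ) :=
  Finsupp.lift (E →₀ ℤ) ℤ V fun v =>
    ∑ e : E, if t e = v then Finsupp.single e (1 : ℤ) else 0


/-! ### Auxiliary lemmas -/

instance {V E : Type*} [DecidableEq E] (t h : E → V) : DecidableEq (LineEdge t h) := by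
  unfold LineEdge; infer_instance

theorem lift_single1 {V M : Type*} [AddCommGroup M] [Module ℤ M]
    (f : V → M) (v : V) : Finsupp.lift M ℤ V f (single v 1) = f v := by
  conv_rhs => rw [← (Finsupp.lift M ℤ V).symm_apply_apply f]
  rw [Finsupp.lift_symm_apply]

section
variable {V E : Type*} [Fintype E] [DecidableEq V] [DecidableEq E] (t h : E → V)

theorem sigma_single (v : V) :
    sigmaMap t (single v 1) = ∑ e : E, if t e = v then Finsupp.single e (1:ℤ) else 0 :=
  lift_single1 _ v

theorem lap_single (v : V) :
    lap t h (single v 1)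
      = ∑ e : E, if t e = v then Finsupp.single (h e) (1:ℤ) - Finsupp.single v 1 else 0 :=
  lift_single1 _ v

theorem psi_single (estar : E) (v : V) :
    psi t h estar (single v 1)
      = if v = t estar then lap t h (single (t estar) 1) - single (h estar) 1
        else lap t h (single v 1) :=
  lift_single1 _ v

theorem phiMod_single (estar : E) (e : E) :
    phiMod (fun p : LineEdge t h => p.1.1) (fun p : LineEdge t h => p.1.2) estar (single e 1)
      = if e = estar then single estar 1
        else lap (fun p : LineEdge t h => p.1.1) (fun p : LineEdge t h => p.1.2)
          (single e 1) :=
  lift_single1 _ e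

theorem sum_lineEdge {V E M : Type*} [Fintype E] [DecidableEq V] [AddCommMonoid M]
    (t h : E → V) (F : E × E → M) :
    (∑ p : LineEdge t h, F p.1) = ∑ q : E × E, if h q.1 = t q.2 then F q else 0 := by
  rw [← Finset.sum_filter]
  unfold LineEdge
  exact (Finset.sum_subtype _ (fun x => by simp) F).symm

theorem sum_nsmul_sigma (v : V) (x : E →₀ ℤ) :
    (∑ e : E, if t e = v then x else 0) = (outdeg t v : ℤ) • x := by
  rw [← Finset.sum_filter, Finset.sum_const, outdeg, Nat.cast_smul_eq_nsmul]

theorem lapL_single (estar : E) (k : ℕ) (hreg : ∀ v : V, outdeg t v = k) (e : E) :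
    lap (fun p : LineEdge t h => p.1.1) (fun p : LineEdge t h => p.1.2) (single e 1)
      = sigmaMap t (single (h e) 1) - (k : ℤ) • single e 1 := by
  rw [lap_single]
  rw [sum_lineEdge t h
    (fun q => if q.1 = e then Finsupp.single q.2 (1:ℤ) - Finsupp.single e 1 else 0),
    Fintype.sum_prod_type]
  have step : ∀ a : E, (∑ b : E,
      if h a = t b then (if a = e then Finsupp.single b (1:ℤ) - Finsupp.single e 1 else 0) else 0)
      = if a = e then
          (∑ b : E, if t b = h e then Finsupp.single b (1:ℤ) else 0)
            - (outdeg t (h e) : ℤ) • Finsupp.single e 1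
        else 0 := by
    intro a
    by_cases ha : a = e
    · subst ha
      simp only [eq_self_iff_true, if_true]
      have : ∀ b : E, (if h a = t b then Finsupp.single b (1:ℤ) - Finsupp.single a 1 else 0)
          = (if t b = h a then Finsupp.single b (1:ℤ) else 0)
            - (if t b = h a then Finsupp.single a (1:ℤ) else 0) := by
        intro b
        by_cases hb : t b = h a
        · simp [hb]
        · rw [if_neg (fun hab : h a = t b => hb hab.symm), if_neg hb, if_neg hb, sub_zero]
      rw [Finset.sum_congr rfl (fun b _ => this b), Finset.sum_sub_distrib,
        sum_nsmul_sigma t]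
    · simp [ha]
  rw [Finset.sum_congr rfl (fun a _ => step a), Finset.sum_ite_eq' Finset.univ e,
    if_pos (Finset.mem_univ e), sigma_single, hreg]

end

section
variable {V E : Type*} [Fintype E] [DecidableEq V] [DecidableEq E] (t h : E → V)
  (estar : E) (k : ℕ) (hreg : ∀ v : V, outdeg t v = k)
include hreg

theorem sumA (v : V) :
    (∑ e : E, if t e = v then sigmaMap t (single (h e) 1) - (k:ℤ) • Finsupp.single e 1 else 0)
      = sigmaMap t (lap t h (single v 1)) := by
  have h1 : ∀ e : E, (if t e = v then sigmaMap t (single (h e) 1) - (k:ℤ) • Finsupp.single e 1 else 0)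
      = (if t e = v then sigmaMap t (single (h e) 1) else 0)
        - (k:ℤ) • (if t e = v then Finsupp.single e 1 else 0) := by
    intro e; by_cases he : t e = v <;> simp [he]
  rw [Finset.sum_congr rfl fun e _ => h1 e, Finset.sum_sub_distrib, ← Finset.smul_sum,
    ← sigma_single, lap_single, map_sum]
  have h2 : ∀ e : E, sigmaMap t (if t e = v then Finsupp.single (h e) 1 - Finsupp.single v 1 else 0)
      = (if t e = v then sigmaMap t (single (h e) 1) else 0)
        - (if t e = v then sigmaMap t (single v 1) else 0) := by
    intro e; by_cases he : t e = v <;> simp [he]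
  rw [Finset.sum_congr rfl fun e _ => h2 e, Finset.sum_sub_distrib, sum_nsmul_sigma t v, hreg]

theorem phi_single_decomp (e : E) :
    phiMod (fun p : LineEdge t h => p.1.1) (fun p : LineEdge t h => p.1.2) estar (single e 1)
      = (sigmaMap t (single (h e) 1) - (k:ℤ) • single e 1)
        + (if e = estar then ((k:ℤ)+1) • single estar 1 - sigmaMap t (single (h estar) 1)
           else 0) := by
  by_cases he : e = estar
  · subst he; rw [phiMod_single, if_pos rfl, if_pos rfl]; simp only [add_smul, one_smul]; abel
  · rw [phiMod_single, if_neg he, if_neg he, lapL_single t h estar k hreg, add_zero]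

theorem phi_sigma (v : V) :
    phiMod (fun p : LineEdge t h => p.1.1) (fun p : LineEdge t h => p.1.2) estar
        (sigmaMap t (single v 1))
      = sigmaMap t (lap t h (single v 1))
        + (if v = t estar then ((k:ℤ)+1) • single estar 1 - sigmaMap t (single (h estar) 1)
           else 0) := by
  set Φ := phiMod (fun p : LineEdge t h => p.1.1) (fun p : LineEdge t h => p.1.2) estar with hΦ
  set C := ((k:ℤ)+1) • single estar (1:ℤ) - sigmaMap t (single (h estar) 1) with hC
  rw [sigma_single, map_sum]
  have h3 : ∀ e : E, Φ (if t e = v then Finsupp.single e (1:ℤ) else 0)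
      = (if t e = v then sigmaMap t (single (h e) 1) - (k:ℤ) • Finsupp.single e 1 else 0)
        + (if e = estar then (if v = t estar then C else 0) else 0) := by
    intro e
    rw [apply_ite Φ, map_zero, hΦ, phi_single_decomp t h estar k hreg]
    by_cases hc : t e = v
    · by_cases he : e = estar
      · subst he
        simp only [if_pos hc, if_pos (rfl : e = e), if_pos hc.symm]
        rfl
      · simp only [if_pos hc, if_neg he, add_zero]
    · by_cases he : e = estar
      · subst he
        simp only [if_neg hc, if_pos (rfl : e = e),
          if_neg (show ¬v = t e from fun hv => hc hv.symm), zero_add, ite_self]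
      · simp only [if_neg hc, if_neg he, zero_add]
  rw [Finset.sum_congr rfl fun e _ => h3 e, Finset.sum_add_distrib,
    sumA t h k hreg, Finset.sum_ite_eq' Finset.univ estar, if_pos (Finset.mem_univ estar)]

theorem key_eq (v : V) :
    phiMod (fun p : LineEdge t h => p.1.1) (fun p : LineEdge t h => p.1.2) estar
        (sigmaMap t (single v 1)
          - (if v = t estar then ((k:ℤ)+1) • single estar 1 else 0))
      = sigmaMap t (psi t h estar (single v 1)) := by
  set Φ := phiMod (fun p : LineEdge t h => p.1.1) (fun p : LineEdge t h => p.1.2) estar with hΦ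
  have hΦe : Φ (if v = t estar then ((k:ℤ)+1) • single estar 1 else 0)
      = (if v = t estar then ((k:ℤ)+1) • single estar 1 else 0) := by
    by_cases hv : v = t estar
    · rw [if_pos hv, map_smul, hΦ, phiMod_single, if_pos rfl]
    · rw [if_neg hv, map_zero]
  rw [map_sub, hΦe, hΦ, phi_sigma t h estar k hreg, psi_single]
  by_cases hv : v = t estar
  · simp only [if_pos hv, map_sub]
    rw [hv]
    abel
  · simp only [if_neg hv, add_zero, sub_zero]

end

/-- for a `k`-out-regular graph, the image of `σ ∘ ψ` is contained
in the image of `φ_{𝓛G,e*}`; consequently `σ` induces a homomorphism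
`σ̄ : cok ψ → K(𝓛G, e*)`. -/
theorem sigma_descends
    {V E : Type*} [Fintype E] [DecidableEq V] [DecidableEq E]
    (t h : E → V) (estar : E) (k : ℕ) (hk : 0 < k)
    (hreg : ∀ v : V, outdeg t v = k) :
    LinearMap.range (sigmaMap t ∘ₗ psi t h estar) ≤
      LinearMap.range
        (phiMod (fun p : LineEdge t h => p.1.1) (fun p : LineEdge t h => p.1.2) estar) ∧
    ∃ σbar : ((V →₀ ℤ) ⧸ LinearMap.range (psi t h estar)) →ₗ[ℤ]
        ((E →₀ ℤ) ⧸ LinearMap.range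
          (phiMod (fun p : LineEdge t h => p.1.1) (fun p : LineEdge t h => p.1.2) estar)),
      ∀ y : V →₀ ℤ,
        σbar (Submodule.Quotient.mk y) = Submodule.Quotient.mk (sigmaMap t y)  := by
  set Φ := phiMod (fun p : LineEdge t h => p.1.1) (fun p : LineEdge t h => p.1.2) estar with hΦ
  set B := Finsupp.lift (E →₀ ℤ) ℤ V (fun v => sigmaMap t (single v 1)
      - (if v = t estar then ((k:ℤ)+1) • single estar 1 else 0)) with hB
  have hcomp : Φ ∘ₗ B = sigmaMap t ∘ₗ psi t h estar := by
    apply (Finsupp.lift (E →₀ ℤ) ℤ V).symm.injective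
    funext v
    rw [Finsupp.lift_symm_apply, Finsupp.lift_symm_apply, LinearMap.comp_apply,
      LinearMap.comp_apply, hB, lift_single1, hΦ]
    exact key_eq t h estar k hreg v
  have hrange : ∀ y : V →₀ ℤ, sigmaMap t (psi t h estar y) ∈ LinearMap.range Φ := by
    intro y
    exact ⟨B y, by rw [← LinearMap.comp_apply, hcomp, LinearMap.comp_apply]⟩
  constructor
  · rintro x ⟨y, rfl⟩
    exact hrange y
  · refine ⟨Submodule.liftQ _ ((LinearMap.range Φ).mkQ ∘ₗ sigmaMap t) ?_, fun y => ?_⟩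
    · rintro x ⟨y, rfl⟩
      simp only [LinearMap.mem_ker, LinearMap.comp_apply, Submodule.mkQ_apply,
        Submodule.Quotient.mk_eq_zero]
      exact hrange y
    · rfl
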